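/- Let b > 0, σ > 0, let ν be a measure on (0,∞) with ∫_0^∞ (z∧1) ν(dz) < ∞, and fix t > 0. Define Δ_t(u) := ∫_0^t ∫_0^∞ (e^{zψ(s,u)} − 1) ν(dz) ds for real u ≤ −1. Then Δ_t is differentiable at every u ≤ −1 with derivative Δ_t'(u) = ∫_0^t ∫_0^∞ [z e^{−bs} / (1 − (σ²u/(2b))(1 − e^{−bs}))²] · exp( z u e^{−bs} / (1 − (σ²u/(2b))(1 − e^{−bs})) ) ν(dz) ds, and Δ_t'(u) → 0 as u → −∞. -/

import Mathlib

open MeasureTheory Filter Set Topology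
open scoped ENNReal

noncomputable def psi (b σ t u : ℝ) : ℝ :=
  u * Real.exp (-b * t) / (1 - σ ^ 2 * u / (2 * b) * (1 - Real.exp (-b * t)))

/-- the denominator -/
noncomputable def Dd (b σ u s : ℝ) : ℝ := 1 - σ ^ 2 * u / (2 * b) * (1 - Real.exp (-b * s))

/-- the derivative integrand -/
noncomputable def gg (b σ u s z : ℝ) : ℝ :=
  z * Real.exp (-b * s) / (1 - σ ^ 2 * u / (2 * b) * (1 - Real.exp (-b * s))) ^ 2 *
    Real.exp (z * u * Real.exp (-b * s) / (1 - σ ^ 2 * u / (2 * b) * (1 - Real.exp (-b * s))))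

lemma Dd_ge_one {b σ u s : ℝ} (hb : 0 < b) (hu : u ≤ 0) (hs : 0 ≤ s) :
    1 ≤ Dd b σ u s := by
  have h1 : Real.exp (-b * s) ≤ 1 := Real.exp_le_one_iff.mpr (by nlinarith)
  have h2 : σ ^ 2 * u / (2 * b) ≤ 0 :=
    div_nonpos_iff.mpr (Or.inr ⟨by nlinarith [sq_nonneg σ], by linarith⟩)
  have := mul_nonneg (neg_nonneg.2 h2) (sub_nonneg.2 h1)
  unfold Dd; nlinarith

lemma gg_nonneg {b σ u s z : ℝ} (hz : 0 ≤ z) : 0 ≤ gg b σ u s z :=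
  mul_nonneg (div_nonneg (mul_nonneg hz (Real.exp_pos _).le) (sq_nonneg _)) (Real.exp_pos _).le

lemma gg_le {b σ u s z : ℝ} (hb : 0 < b) (hz : 0 < z) (hu : u < 0) (hs : 0 ≤ s) :
    gg b σ u s z ≤ min z (Real.exp (-1) / (-u)) := by
  have hD : 1 ≤ Dd b σ u s := Dd_ge_one hb hu.le hs
  have hDpos : 0 < Dd b σ u s := by linarith
  have hE : 0 < Real.exp (-b * s) := Real.exp_pos _
  have hE1 : Real.exp (-b * s) ≤ 1 := Real.exp_le_one_iff.mpr (by nlinarith)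
  set E := Real.exp (-b * s) with hEdef
  set D := Dd b σ u s with hDdef
  have hgg : gg b σ u s z = z * E / D ^ 2 * Real.exp (z * u * E / D) := rfl
  have harg : z * u * E / D ≤ 0 := div_nonpos_iff.mpr (Or.inr ⟨by nlinarith [mul_pos hz hE], hDpos.le⟩)
  have hexp1 : Real.exp (z * u * E / D) ≤ 1 := Real.exp_le_one_iff.mpr harg
  refine le_min ?_ ?_
  · calc gg b σ u s z ≤ z * E / D ^ 2 * 1 := by
          rw [hgg]
          exact mul_le_mul_of_nonneg_left hexp1 (div_nonneg (by positivity) (by positivity))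
      _ ≤ z := by
          rw [mul_one, div_le_iff₀ (by positivity)]
          nlinarith [mul_nonneg hz.le (sub_nonneg.2 hE1), sq_nonneg (D - 1),
            mul_nonneg hz.le (mul_nonneg (sub_nonneg.2 hD) (by linarith : (0:ℝ) ≤ D + 1))]
  · -- second bound
    set a : ℝ := -(z * u * E / D) with ha
    have hane : z * u * E / D = -a := by rw [ha]; ring
    have hapos : 0 < a := by
      rw [ha]; have : z * u * E / D < 0 := div_neg_of_neg_of_pos (by nlinarith [mul_pos hz hE]) hDpos
      linarith
    have hkey : a * Real.exp (-a) ≤ Real.exp (-1) := by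
      have h1 : a ≤ Real.exp (a - 1) := by
        have := Real.add_one_le_exp (a - 1); linarith
      calc a * Real.exp (-a) ≤ Real.exp (a - 1) * Real.exp (-a) := by
            gcongr
        _ = Real.exp (-1) := by rw [← Real.exp_add]; ring_nf
    have hgg_eq : gg b σ u s z = a * Real.exp (-a) / ((-u) * D) := by
      rw [hgg, hane, ha, eq_div_iff (ne_of_gt (by nlinarith : (0:ℝ) < -u * D))]
      field_simp
    rw [hgg_eq]
    calc a * Real.exp (-a) / ((-u) * D) ≤ Real.exp (-1) / ((-u) * D) :=
          (div_le_div_iff_of_pos_right (by nlinarith : (0:ℝ) < -u * D)).mpr hkey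
      _ ≤ Real.exp (-1) / (-u) :=
          div_le_div_of_nonneg_left (Real.exp_pos _).le (by linarith) (by nlinarith)

lemma exp_sub_one_bound {b σ u s z : ℝ} (hb : 0 < b) (hz : 0 < z) (hu : u < 0) (hs : 0 ≤ s) :
    |Real.exp (z * psi b σ s u) - 1| ≤ (1 - u) * min z 1 := by
  have hD : 1 ≤ Dd b σ u s := Dd_ge_one hb hu.le hs
  have hDpos : 0 < Dd b σ u s := by linarith
  have hE : 0 < Real.exp (-b * s) := Real.exp_pos _
  have hE1 : Real.exp (-b * s) ≤ 1 := Real.exp_le_one_iff.mpr (by nlinarith)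
  have hψ : psi b σ s u = u * Real.exp (-b * s) / Dd b σ u s := rfl
  have hψ0 : psi b σ s u ≤ 0 := by
    rw [hψ]
    exact div_nonpos_iff.mpr (Or.inr ⟨by nlinarith, hDpos.le⟩)
  have hψge : -u ≥ -psi b σ s u := by
    rw [hψ, ge_iff_le, neg_div' , div_le_iff₀ hDpos]
    nlinarith
  have hexple : Real.exp (z * psi b σ s u) ≤ 1 :=
    Real.exp_le_one_iff.mpr (by nlinarith)
  have habs : |Real.exp (z * psi b σ s u) - 1| = 1 - Real.exp (z * psi b σ s u) := by
    rw [abs_sub_comm, abs_of_nonneg (by linarith)]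
  rw [habs]
  have hle1 : 1 - Real.exp (z * psi b σ s u) ≤ 1 := by
    linarith [(Real.exp_pos (z * psi b σ s u)).le]
  have hlex : 1 - Real.exp (z * psi b σ s u) ≤ z * (-psi b σ s u) := by
    have := Real.add_one_le_exp (z * psi b σ s u)
    nlinarith
  rcases le_total z 1 with h | h
  · rw [min_eq_left h]
    calc 1 - Real.exp (z * psi b σ s u) ≤ z * (-psi b σ s u) := hlex
      _ ≤ z * (-u) := by nlinarith
      _ ≤ (1 - u) * z := by nlinarith
  · rw [min_eq_right h]
    calc 1 - Real.exp (z * psi b σ s u) ≤ 1 := hle1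
      _ ≤ (1 - u) * 1 := by nlinarith

lemma min_le_mul_min {z c K : ℝ} (hz : 0 < z) (hc : c ≤ K) (hK : 1 ≤ K) :
    min z c ≤ K * min z 1 := by
  rcases le_total z 1 with h | h
  · rw [min_eq_left h]
    calc min z c ≤ z := min_le_left _ _
      _ ≤ K * z := by nlinarith
  · rw [min_eq_right h, mul_one]
    calc min z c ≤ c := min_le_right _ _
      _ ≤ K := hc

lemma hasDerivAt_pointwise {b σ u s : ℝ} (hb : 0 < b) (hu : u < 0) (hs : 0 ≤ s) (z : ℝ) :
    HasDerivAt (fun v => Real.exp (z * psi b σ s v) - 1) (gg b σ u s z) u := by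
  have hD : 1 ≤ Dd b σ u s := Dd_ge_one hb hu.le hs
  have hDne : (1 - σ ^ 2 * u / (2 * b) * (1 - Real.exp (-b * s))) ≠ 0 := by
    have : Dd b σ u s = 1 - σ ^ 2 * u / (2 * b) * (1 - Real.exp (-b * s)) := rfl
    rw [← this]; linarith
  have h1 : HasDerivAt (fun v : ℝ => v * Real.exp (-b * s)) (Real.exp (-b * s)) u := by
    simpa using (hasDerivAt_id u).mul_const (Real.exp (-b * s))
  have h2 : HasDerivAt (fun v : ℝ => 1 - σ ^ 2 * v / (2 * b) * (1 - Real.exp (-b * s)))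
      (-(σ ^ 2 * 1 / (2 * b) * (1 - Real.exp (-b * s)))) u := by
    have h3 : HasDerivAt (fun v : ℝ => σ ^ 2 * v / (2 * b) * (1 - Real.exp (-b * s)))
        (σ ^ 2 * 1 / (2 * b) * (1 - Real.exp (-b * s))) u :=
      (((hasDerivAt_id u).const_mul (σ ^ 2)).div_const (2 * b)).mul_const _
    simpa using h3.const_sub 1
  have hdiv := h1.div h2 hDne
  have hexp := ((hdiv.const_mul z).exp).sub_const 1
  have hfun : (fun v => Real.exp (z * psi b σ s v) - 1)
      = fun v => Real.exp (z * (v * Real.exp (-b * s) /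
          (1 - σ ^ 2 * v / (2 * b) * (1 - Real.exp (-b * s))))) - 1 := rfl
  rw [hfun]
  convert hexp using 1
  have hψ : z * psi b σ s u = z * (u * Real.exp (-b * s) /
      (1 - σ ^ 2 * u / (2 * b) * (1 - Real.exp (-b * s)))) := rfl
  show gg b σ u s z = _
  rw [gg]
  have harg : z * u * Real.exp (-b * s) / (1 - σ ^ 2 * u / (2 * b) * (1 - Real.exp (-b * s)))
      = z * (u * Real.exp (-b * s) / (1 - σ ^ 2 * u / (2 * b) * (1 - Real.exp (-b * s)))) := by
    ring
  rw [harg]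
  rw [mul_comm]
  congr 1
  rw [← mul_div_assoc]
  congr 1
  have h2b : (2 * b) ≠ 0 := by positivity
  field_simp
  ring
  all_goals rfl

lemma min_integrable {ν : Measure ℝ}
    (hν : ∫⁻ z in Set.Ioi (0 : ℝ), ENNReal.ofReal (min z 1) ∂ν < ⊤) :
    Integrable (fun z => min z 1) (ν.restrict (Set.Ioi 0)) := by
  refine ⟨(continuous_id.min continuous_const).aestronglyMeasurable, ?_⟩
  rw [hasFiniteIntegral_iff_ofReal ?h]
  · exact hν
  · filter_upwards [ae_restrict_mem measurableSet_Ioi] with z hz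
    exact le_min hz.le zero_le_one

lemma cont_z_F {b σ s v : ℝ} :
    Continuous (fun z : ℝ => Real.exp (z * psi b σ s v) - 1) :=
  (Real.continuous_exp.comp (continuous_mul_right _)).sub continuous_const

lemma cont_z_gg {b σ x s : ℝ} : Continuous (fun z : ℝ => gg b σ x s z) := by
  unfold gg
  exact ((continuous_mul_right _).div_const _).mul
    (Real.continuous_exp.comp (((continuous_mul_right _).mul continuous_const).div_const _))

lemma contOn_psi {b σ u : ℝ} (hb : 0 < b) (hu : u < 0) :
    ContinuousOn (fun s => psi b σ s u) (Set.Ici 0) := by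
  unfold psi
  apply ContinuousOn.div
  · exact (continuous_const.mul (Real.continuous_exp.comp
      (continuous_const.mul continuous_id))).continuousOn
  · exact (continuous_const.sub (continuous_const.mul (continuous_const.sub
      (Real.continuous_exp.comp (continuous_const.mul continuous_id))))).continuousOn
  · intro s hs
    have := Dd_ge_one (u := u) (σ := σ) hb hu.le hs
    unfold Dd at this
    intro h; rw [h] at this; norm_num at this

lemma contOn_Dd {b σ u : ℝ} : ContinuousOn (fun s => Dd b σ u s) (Set.Ici 0) := by
  unfold Dd
  exact (continuous_const.sub (continuous_const.mul (continuous_const.sub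
    (Real.continuous_exp.comp (continuous_const.mul continuous_id))))).continuousOn

lemma contOn_s_gg {b σ u z : ℝ} (hb : 0 < b) (hu : u < 0) :
    ContinuousOn (fun s => gg b σ u s z) (Set.Ici 0) := by
  have hDne : ∀ s ∈ Set.Ici (0:ℝ), (1 - σ ^ 2 * u / (2 * b) * (1 - Real.exp (-b * s))) ≠ 0 := by
    intro s hs
    have := Dd_ge_one (u := u) (σ := σ) hb hu.le hs
    unfold Dd at this
    intro h; rw [h] at this; norm_num at this
  have hE : ContinuousOn (fun s : ℝ => Real.exp (-b * s)) (Set.Ici 0) :=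
    (Real.continuous_exp.comp (continuous_const.mul continuous_id)).continuousOn
  have hDcont : ContinuousOn
      (fun s => 1 - σ ^ 2 * u / (2 * b) * (1 - Real.exp (-b * s))) (Set.Ici 0) :=
    continuousOn_const.sub (continuousOn_const.mul (continuousOn_const.sub hE))
  unfold gg
  exact ((continuousOn_const.mul hE).div (hDcont.pow 2)
      (fun s hs => pow_ne_zero 2 (hDne s hs))).mul
    (Real.continuous_exp.comp_continuousOn
      (((continuousOn_const.mul continuousOn_const).mul hE).div hDcont hDne))

lemma contOn_intF {b σ u : ℝ} {ν : Measure ℝ} (hb : 0 < b) (hu : u < 0)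
    (hint : Integrable (fun z => min z 1) (ν.restrict (Set.Ioi 0))) :
    ContinuousOn (fun s => ∫ z in Set.Ioi (0:ℝ), (Real.exp (z * psi b σ s u) - 1) ∂ν)
      (Set.Ici 0) := by
  intro s₀ hs₀
  refine tendsto_integral_filter_of_dominated_convergence (fun z => (1 - u) * min z 1)
    (Eventually.of_forall fun s => cont_z_F.aestronglyMeasurable) ?_ (hint.const_mul _) ?_
  · filter_upwards [eventually_mem_nhdsWithin] with s hs
    filter_upwards [ae_restrict_mem measurableSet_Ioi] with z hz
    rw [Real.norm_eq_abs]
    exact exp_sub_one_bound hb hz hu hs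
  · refine Eventually.of_forall fun z => ?_
    have hcont : ContinuousOn (fun s => Real.exp (z * psi b σ s u) - 1) (Set.Ici 0) :=
      (Real.continuous_exp.comp_continuousOn
        (continuousOn_const.mul (contOn_psi hb hu))).sub continuousOn_const
    exact hcont s₀ hs₀

lemma contOn_intG {b σ u : ℝ} {ν : Measure ℝ} (hb : 0 < b) (hu : u < 0)
    (hint : Integrable (fun z => min z 1) (ν.restrict (Set.Ioi 0))) :
    ContinuousOn (fun s => ∫ z in Set.Ioi (0:ℝ), gg b σ u s z ∂ν) (Set.Ici 0) := by
  intro s₀ hs₀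
  refine tendsto_integral_filter_of_dominated_convergence
    (fun z => max 1 (Real.exp (-1) / (-u)) * min z 1)
    (Eventually.of_forall fun s => cont_z_gg.aestronglyMeasurable) ?_ (hint.const_mul _) ?_
  · filter_upwards [eventually_mem_nhdsWithin] with s hs
    filter_upwards [ae_restrict_mem measurableSet_Ioi] with z hz
    rw [Real.norm_eq_abs, abs_of_nonneg (gg_nonneg hz.le)]
    exact le_trans (gg_le hb hz hu hs)
      (min_le_mul_min hz (le_max_right _ _) (le_max_left _ _))
  · exact Eventually.of_forall fun z => (contOn_s_gg hb hu) s₀ hs₀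

lemma aesm_intF {b σ u t : ℝ} {ν : Measure ℝ} (hb : 0 < b) (hu : u < 0)
    (hint : Integrable (fun z => min z 1) (ν.restrict (Set.Ioi 0))) :
    AEStronglyMeasurable (fun s => ∫ z in Set.Ioi (0:ℝ), (Real.exp (z * psi b σ s u) - 1) ∂ν)
      (volume.restrict (Set.Ioc 0 t)) :=
  AEStronglyMeasurable.mono_set (fun x hx => le_of_lt hx.1)
    ((contOn_intF hb hu hint).aestronglyMeasurable measurableSet_Ici)

lemma aesm_intG {b σ u t : ℝ} {ν : Measure ℝ} (hb : 0 < b) (hu : u < 0)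
    (hint : Integrable (fun z => min z 1) (ν.restrict (Set.Ioi 0))) :
    AEStronglyMeasurable (fun s => ∫ z in Set.Ioi (0:ℝ), gg b σ u s z ∂ν)
      (volume.restrict (Set.Ioc 0 t)) :=
  AEStronglyMeasurable.mono_set (fun x hx => le_of_lt hx.1)
    ((contOn_intG hb hu hint).aestronglyMeasurable measurableSet_Ici)

lemma inner_hasDerivAt {b σ s x : ℝ} {ν : Measure ℝ} (hb : 0 < b) (hs : 0 ≤ s)
    (hx : x ≤ -(1/2))
    (hint : Integrable (fun z => min z 1) (ν.restrict (Set.Ioi 0))) :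
    HasDerivAt (fun v => ∫ z in Set.Ioi (0:ℝ), (Real.exp (z * psi b σ s v) - 1) ∂ν)
      (∫ z in Set.Ioi (0:ℝ), gg b σ x s z ∂ν) x := by
  have hx0 : x < 0 := by linarith
  refine (hasDerivAt_integral_of_dominated_loc_of_deriv_le
    (F := fun v z => Real.exp (z * psi b σ s v) - 1) (F' := fun v z => gg b σ v s z)
    (bound := fun z => 4 * min z 1) (Metric.ball_mem_nhds x (by norm_num : (0:ℝ) < 1/4))
    (Eventually.of_forall fun v => cont_z_F.aestronglyMeasurable) ?_
    cont_z_gg.aestronglyMeasurable ?_ (hint.const_mul 4) ?_).2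
  · -- integrability of F x
    refine Integrable.mono' (hint.const_mul (1 - x)) cont_z_F.aestronglyMeasurable ?_
    filter_upwards [ae_restrict_mem measurableSet_Ioi] with z hz
    rw [Real.norm_eq_abs]
    exact exp_sub_one_bound hb hz hx0 hs
  · -- bound on F'
    filter_upwards [ae_restrict_mem measurableSet_Ioi] with z hz
    intro v hv
    have hvx : v < x + 1/4 := by
      have := hv
      rw [Metric.mem_ball, Real.dist_eq] at this
      have := (abs_lt.mp this).2
      linarith
    have hv0 : v < 0 := by linarith
    rw [Real.norm_eq_abs, abs_of_nonneg (gg_nonneg hz.le)]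
    refine le_trans (gg_le hb hz hv0 hs) (min_le_mul_min hz ?_ (by norm_num))
    have he : Real.exp (-1) ≤ 1 := Real.exp_le_one_iff.mpr (by norm_num)
    rw [div_le_iff₀ (by linarith : (0:ℝ) < -v)]
    nlinarith
  · -- differentiability
    filter_upwards [ae_restrict_mem measurableSet_Ioi] with z _
    intro v hv
    have hvx : v < x + 1/4 := by
      rw [Metric.mem_ball, Real.dist_eq] at hv
      have := (abs_lt.mp hv).2
      linarith
    exact hasDerivAt_pointwise hb (by linarith) hs z

lemma gg_tendsto_zero {b σ s z : ℝ} (hb : 0 < b) (hσ : 0 < σ) (hs : 0 < s) (hz : 0 < z) :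
    Tendsto (fun u => gg b σ u s z) atBot (𝓝 0) := by
  have hE : 0 < Real.exp (-b * s) := Real.exp_pos _
  have hE1 : Real.exp (-b * s) < 1 := by
    rw [Real.exp_lt_one_iff]; nlinarith
  have hc : 0 < σ ^ 2 / (2 * b) * (1 - Real.exp (-b * s)) :=
    mul_pos (by positivity) (by linarith)
  set c := σ ^ 2 / (2 * b) * (1 - Real.exp (-b * s)) with hcdef
  have hDtop : Tendsto (fun u => Dd b σ u s) atBot atTop := by
    refine tendsto_atTop.2 fun B => ?_
    filter_upwards [eventually_le_atBot ((1 - B) / c)] with u hu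
    have h1 : Dd b σ u s = 1 - c * u := by rw [hcdef]; unfold Dd; ring
    have h2 : u * c ≤ 1 - B := by
      rw [← le_div_iff₀ hc]; exact hu
    rw [h1]; nlinarith
  have hinv : Tendsto (fun u => (Dd b σ u s)⁻¹) atBot (𝓝 0) :=
    tendsto_inv_atTop_zero.comp hDtop
  have hmaj : Tendsto (fun u => z * Real.exp (-b * s) / (Dd b σ u s) ^ 2) atBot (𝓝 0) := by
    have h := (hinv.pow 2).const_mul (z * Real.exp (-b * s))
    simp only [ne_eq, OfNat.ofNat_ne_zero, not_false_eq_true, zero_pow, mul_zero] at h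
    refine h.congr fun u => ?_
    rw [div_eq_mul_inv, ← inv_pow]
  refine squeeze_zero_norm' ?_ hmaj
  filter_upwards [eventually_le_atBot (0:ℝ)] with u hu0
  have hD : 1 ≤ Dd b σ u s := Dd_ge_one hb hu0 hs.le
  have hDpos : 0 < Dd b σ u s := by linarith
  have hgg : gg b σ u s z
      = z * Real.exp (-b * s) / Dd b σ u s ^ 2
        * Real.exp (z * u * Real.exp (-b * s) / Dd b σ u s) := rfl
  rw [Real.norm_eq_abs, abs_of_nonneg (gg_nonneg hz.le), hgg]
  have hexp1 : Real.exp (z * u * Real.exp (-b * s) / Dd b σ u s) ≤ 1 :=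
    Real.exp_le_one_iff.mpr (div_nonpos_iff.mpr
      (Or.inr ⟨by nlinarith [mul_pos hz hE], hDpos.le⟩))
  have hfac : 0 ≤ z * Real.exp (-b * s) / Dd b σ u s ^ 2 := by positivity
  nlinarith

theorem Delta_hasDerivAt_and_deriv_tendsto_zero (b σ t : ℝ) (hb : 0 < b) (hσ : 0 < σ)
    (ht : 0 < t)
    (ν : Measure ℝ) (hνsupp : ν (Set.Iic 0) = 0)
    (hν : ∫⁻ z in Set.Ioi (0 : ℝ), ENNReal.ofReal (min z 1) ∂ν < ⊤) :
    (∀ u : ℝ, u ≤ -1 →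
      HasDerivAt
        (fun v : ℝ => ∫ s in Set.Ioc (0 : ℝ) t,
          ∫ z in Set.Ioi (0 : ℝ), (Real.exp (z * psi b σ s v) - 1) ∂ν)
        (∫ s in Set.Ioc (0 : ℝ) t,
          ∫ z in Set.Ioi (0 : ℝ),
            z * Real.exp (-b * s) / (1 - σ ^ 2 * u / (2 * b) * (1 - Real.exp (-b * s))) ^ 2 *
              Real.exp (z * u * Real.exp (-b * s) /
                (1 - σ ^ 2 * u / (2 * b) * (1 - Real.exp (-b * s)))) ∂ν)
        u) ∧
      Filter.Tendsto
        (fun u : ℝ => ∫ s in Set.Ioc (0 : ℝ) t,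
          ∫ z in Set.Ioi (0 : ℝ),
            z * Real.exp (-b * s) / (1 - σ ^ 2 * u / (2 * b) * (1 - Real.exp (-b * s))) ^ 2 *
              Real.exp (z * u * Real.exp (-b * s) /
                (1 - σ ^ 2 * u / (2 * b) * (1 - Real.exp (-b * s)))) ∂ν)
        Filter.atBot (nhds 0) := by
  suffices h : (∀ u : ℝ, u ≤ -1 →
      HasDerivAt
        (fun v : ℝ => ∫ s in Set.Ioc (0 : ℝ) t,
          ∫ z in Set.Ioi (0 : ℝ), (Real.exp (z * psi b σ s v) - 1) ∂ν)
        (∫ s in Set.Ioc (0 : ℝ) t, ∫ z in Set.Ioi (0 : ℝ), gg b σ u s z ∂ν) u) ∧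
      Filter.Tendsto
        (fun u : ℝ => ∫ s in Set.Ioc (0 : ℝ) t, ∫ z in Set.Ioi (0 : ℝ), gg b σ u s z ∂ν)
        Filter.atBot (nhds 0) by
    simpa only [gg] using h
  have hint : Integrable (fun z => min z 1) (ν.restrict (Set.Ioi 0)) := min_integrable hν
  have hMb : Integrable (fun z : ℝ => 4 * min z 1) (ν.restrict (Set.Ioi 0)) := hint.const_mul 4
  set M : ℝ := ∫ z in Set.Ioi (0:ℝ), 4 * min z 1 ∂ν with hM
  have hMconst : Integrable (fun _ : ℝ => M) (volume.restrict (Set.Ioc 0 t)) := by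
    exact integrableOn_const measure_Ioc_lt_top.ne
  -- uniform bound on the inner derivative integral
  have hbnd : ∀ x : ℝ, x < 0 → ∀ s ∈ Set.Ioc (0:ℝ) t, Real.exp (-1) / (-x) ≤ 4 →
      ‖∫ z in Set.Ioi (0:ℝ), gg b σ x s z ∂ν‖ ≤ M := by
    intro x hx s hs h4
    rw [hM]
    apply norm_integral_le_of_norm_le hMb
    filter_upwards [ae_restrict_mem measurableSet_Ioi] with z hz
    rw [Real.norm_eq_abs, abs_of_nonneg (gg_nonneg hz.le)]
    exact le_trans (gg_le hb hz hx hs.1.le) (min_le_mul_min hz h4 (by norm_num))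
  have he1 : Real.exp (-1) ≤ 1 := Real.exp_le_one_iff.mpr (by norm_num)
  constructor
  · intro u hu
    have hu0 : u < 0 := by linarith
    have key := hasDerivAt_integral_of_dominated_loc_of_deriv_le
      (F := fun v s => ∫ z in Set.Ioi (0:ℝ), (Real.exp (z * psi b σ s v) - 1) ∂ν)
      (F' := fun v s => ∫ z in Set.Ioi (0:ℝ), gg b σ v s z ∂ν)
      (bound := fun _ => M)
      (μ := volume.restrict (Set.Ioc 0 t)) (x₀ := u)
      (Metric.ball_mem_nhds u (by norm_num : (0:ℝ) < 1/2))
      ?_ ?_ ?_ ?_ hMconst ?_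
    · exact key.2
    · -- eventual measurability
      filter_upwards [isOpen_Iio.eventually_mem (show u ∈ Set.Iio (0:ℝ) from hu0)] with x hx
      exact aesm_intF hb hx hint
    · -- integrability at u
      refine Integrable.mono'
        (integrableOn_const measure_Ioc_lt_top.ne :
          IntegrableOn (fun _ : ℝ => ∫ z in Set.Ioi (0:ℝ), (1 - u) * min z 1 ∂ν)
            (Set.Ioc 0 t) volume)
        (aesm_intF hb hu0 hint) ?_
      filter_upwards [ae_restrict_mem measurableSet_Ioc] with s hs
      apply norm_integral_le_of_norm_le (hint.const_mul _)
      filter_upwards [ae_restrict_mem measurableSet_Ioi] with z hz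
      rw [Real.norm_eq_abs]
      exact exp_sub_one_bound hb hz hu0 hs.1.le
    · exact aesm_intG hb hu0 hint
    · -- bound on the ball
      filter_upwards [ae_restrict_mem measurableSet_Ioc] with s hs
      intro x hxb
      rw [Metric.mem_ball, Real.dist_eq] at hxb
      have hx2 : x < -(1/2) := by
        have := (abs_lt.mp hxb).2; linarith
      refine hbnd x (by linarith) s hs ?_
      rw [div_le_iff₀ (by linarith : (0:ℝ) < -x)]
      nlinarith
    · -- differentiability on the ball
      filter_upwards [ae_restrict_mem measurableSet_Ioc] with s hs
      intro x hxb
      rw [Metric.mem_ball, Real.dist_eq] at hxb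
      have hx2 : x ≤ -(1/2) := by
        have := (abs_lt.mp hxb).2; linarith
      exact inner_hasDerivAt hb hs.1.le hx2 hint
  · -- the limit as u → -∞
    have h := tendsto_integral_filter_of_dominated_convergence
      (μ := volume.restrict (Set.Ioc 0 t)) (l := atBot)
      (F := fun (u : ℝ) (s : ℝ) => ∫ z in Set.Ioi (0:ℝ), gg b σ u s z ∂ν)
      (f := fun _ => (0:ℝ)) (bound := fun _ => M)
      ?_ ?_ hMconst ?_
    · simpa using h
    · filter_upwards [eventually_le_atBot (-1:ℝ)] with u hu
      exact aesm_intG hb (by linarith) hint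
    · filter_upwards [eventually_le_atBot (-1:ℝ)] with u hu
      filter_upwards [ae_restrict_mem measurableSet_Ioc] with s hs
      refine hbnd u (by linarith) s hs ?_
      rw [div_le_iff₀ (by linarith : (0:ℝ) < -u)]
      nlinarith
    · filter_upwards [ae_restrict_mem measurableSet_Ioc] with s hs
      have h2 := tendsto_integral_filter_of_dominated_convergence
        (μ := ν.restrict (Set.Ioi 0)) (l := atBot)
        (F := fun (u : ℝ) (z : ℝ) => gg b σ u s z)
        (f := fun _ => (0:ℝ)) (bound := fun z => 4 * min z 1)
        (Eventually.of_forall fun _ => cont_z_gg.aestronglyMeasurable)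
        ?_ hMb ?_
      · simpa using h2
      · filter_upwards [eventually_le_atBot (-1:ℝ)] with u hu
        filter_upwards [ae_restrict_mem measurableSet_Ioi] with z hz
        rw [Real.norm_eq_abs, abs_of_nonneg (gg_nonneg hz.le)]
        refine le_trans (gg_le hb hz (by linarith) hs.1.le)
          (min_le_mul_min hz ?_ (by norm_num))
        rw [div_le_iff₀ (by linarith : (0:ℝ) < -u)]
        nlinarith
      · filter_upwards [ae_restrict_mem measurableSet_Ioi] with z hz
        exact gg_tendsto_zero hb hσ hs.1 hz
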